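/- arXiv:1008.2610 — 6 statements merged into one kernel-verified Lean document; each statement's English description precedes it below -/
import Mathlib

section
/- Let m ≥ 2 and n ≥ 1 be integers and let G be a simple graph on n vertices with Laplacian matrix L(G) and complement graph G^c. Then the Laplacian matrix L(K_m ∨ G) of the join of the complete graph K_m with G is unimodularly equivalent over ℤ to the block diagonal matrix ((m+n)·I_n − L(G^c)) ⊕ (m+n)·I_{m−2} ⊕ I_1 ⊕ 0_1, i.e., there exist integer matrices P and Q with determinant ±1 such that P · L(K_m ∨ G) · Q equals this block diagonal matrix. -/
open Matrix SimpleGraph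

/-- The join of two simple graphs on disjoint vertex sets: all edges of both graphs,
plus all edges between the two vertex sets. -/
def graphJoin {α β : Type*} (G : SimpleGraph α) (H : SimpleGraph β) :
    SimpleGraph (α ⊕ β) where
  Adj x y :=
    match x, y with
    | Sum.inl a, Sum.inl b => G.Adj a b
    | Sum.inr a, Sum.inr b => H.Adj a b
    | _, _ => True
  symm := by
    refine ⟨?_⟩
    rintro (a | a) (b | b) h
    · exact G.adj_symm h
    · trivial
    · trivial
    · exact H.adj_symm h
  loopless := by
    refine ⟨?_⟩
    rintro (a | a) h
    · exact G.ne_of_adj h rfl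
    · exact H.ne_of_adj h rfl

instance graphJoin.adjDecidable {α β : Type*} (G : SimpleGraph α) (H : SimpleGraph β)
    [DecidableRel G.Adj] [DecidableRel H.Adj] :
    DecidableRel (graphJoin G H).Adj := fun x y =>
  match x, y with
  | Sum.inl a, Sum.inl b => (inferInstance : Decidable (G.Adj a b))
  | Sum.inr a, Sum.inr b => (inferInstance : Decidable (H.Adj a b))
  | Sum.inl _, Sum.inr _ => Decidable.isTrue trivial
  | Sum.inr _, Sum.inl _ => Decidable.isTrue trivial

/-- Unimodular equivalence over ℤ of integer matrices (up to a bijection identifying the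
index types): `B = P * A * Q` for integer matrices `P`, `Q` of determinant `±1`. -/
def MatrixUnimodEquiv {ι₁ ι₂ κ₁ κ₂ : Type*}
    [Fintype ι₁] [Fintype ι₂] [Fintype κ₁] [Fintype κ₂]
    [DecidableEq ι₁] [DecidableEq ι₂] [DecidableEq κ₁] [DecidableEq κ₂]
    (A : Matrix ι₁ ι₂ ℤ) (B : Matrix κ₁ κ₂ ℤ) : Prop :=
  ∃ (e₁ : ι₁ ≃ κ₁) (e₂ : ι₂ ≃ κ₂) (P : Matrix κ₁ κ₁ ℤ) (Q : Matrix κ₂ κ₂ ℤ),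
    (P.det = 1 ∨ P.det = -1) ∧ (Q.det = 1 ∨ Q.det = -1) ∧
    P * (Matrix.reindex e₁ e₂ A) * Q = B

namespace LapJoinAux

open Finset

abbrev II (p n : ℕ) := Fin (p+2) ⊕ Fin n

def kk0 {p n : ℕ} : II p n := Sum.inl 0
def kk1 {p n : ℕ} : II p n := Sum.inl 1

lemma kk01 {p n : ℕ} : (kk0 : II p n) ≠ kk1 := by
  simp [kk0, kk1, Fin.ext_iff]

def Pt (p n : ℕ) : Matrix (II p n) (II p n) ℤ := Matrix.of fun x y =>
  if x = kk1 then 1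
  else if x = kk0 then (if y = kk0 then -1 else 0)
  else (if y = x then 1 else 0) + (if y = kk0 then -1 else 0)

def Qt (p n : ℕ) : Matrix (II p n) (II p n) ℤ := Matrix.of fun x y =>
  if y = kk0 then 1
  else if y = kk1 then (if x = kk1 then 1 else 0)
  else (if x = y then 1 else 0) + (if x = kk1 then -1 else 0)

/-- indicator vector -/
def ek {p n : ℕ} (z : II p n) : II p n → ℤ := fun s => if s = z then 1 else 0

def vP1 (p n : ℕ) : II p n → ℤ := fun s =>
  if s = kk0 then 0 else if s = kk1 then (p : ℤ) + n + 1 else -1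

def ww (p n : ℕ) : II p n → ℤ := fun s => if s = kk0 ∨ s = kk1 then 0 else 1

def cQ1 (p n : ℕ) : II p n → ℤ := fun s =>
  if s = kk1 then 0 else if s = kk0 then (p : ℤ) + n + 1 else -1

def P1 (p n : ℕ) : Matrix (II p n) (II p n) ℤ := 1 + replicateCol Unit (vP1 p n) * replicateRow Unit (ek kk0)
def P2 (p n : ℕ) : Matrix (II p n) (II p n) ℤ := 1 + replicateCol Unit (ek kk1) * replicateRow Unit (ww p n)
def P3 (p n : ℕ) : Matrix (II p n) (II p n) ℤ :=
  1 + replicateCol Unit (fun s => if s = kk0 then -2 else 0) * replicateRow Unit (ek kk0)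
def Q1 (p n : ℕ) : Matrix (II p n) (II p n) ℤ := 1 + replicateCol Unit (ek kk1) * replicateRow Unit (cQ1 p n)
def Q2 (p n : ℕ) : Matrix (II p n) (II p n) ℤ := 1 + replicateCol Unit (ww p n) * replicateRow Unit (ek kk0)

lemma col_mul_row_apply {p n : ℕ} (u v : II p n → ℤ) (x y : II p n) :
    (replicateCol Unit u * replicateRow Unit v) x y = u x * v y := by
  simp [mul_apply]

lemma P1_apply {p n : ℕ} (x y : II p n) :
    P1 p n x y = (if x = y then 1 else 0) + vP1 p n x * (if y = kk0 then 1 else 0) := by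
  simp [P1, col_mul_row_apply, one_apply, ek]

lemma P2_apply {p n : ℕ} (x y : II p n) :
    P2 p n x y = (if x = y then 1 else 0) + (if x = kk1 then ww p n y else 0) := by
  simp [P2, col_mul_row_apply, one_apply, ek, ite_mul]

lemma P3_apply {p n : ℕ} (x y : II p n) :
    P3 p n x y = (if x = y then 1 else 0) + (if x = kk0 then -2 else 0) * (if y = kk0 then 1 else 0) := by
  simp [P3, col_mul_row_apply, one_apply, ek]

lemma Q1_apply {p n : ℕ} (x y : II p n) :
    Q1 p n x y = (if x = y then 1 else 0) + (if x = kk1 then cQ1 p n y else 0) := by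
  simp [Q1, col_mul_row_apply, one_apply, ek, ite_mul]

lemma Q2_apply {p n : ℕ} (x y : II p n) :
    Q2 p n x y = (if x = y then 1 else 0) + ww p n x * (if y = kk0 then 1 else 0) := by
  simp [Q2, col_mul_row_apply, one_apply, ek]

lemma card_II (p n : ℕ) : Fintype.card (II p n) = p + 2 + n := by
  simp

lemma sum_ww_vP1 (p n : ℕ) : ∑ s : II p n, ww p n s * vP1 p n s = -((p : ℤ) + n) := by
  have h : ∀ s ∈ (univ : Finset (II p n)), ww p n s * vP1 p n s
      = -1 + (if s = kk0 then 1 else 0) + (if s = kk1 then 1 else 0) := by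
    intro s _
    simp only [ww, vP1]
    split_ifs <;> subst_vars <;> (try simp_all [kk0, kk1, Fin.ext_iff]) <;> (try ring)
  rw [Finset.sum_congr rfl h]
  simp only [Finset.sum_add_distrib, Finset.sum_const, Finset.sum_ite_eq', mem_univ, if_pos,
    Finset.card_univ, card_II]
  push_cast
  ring

lemma sum_ww_cQ1 (p n : ℕ) : ∑ s : II p n, cQ1 p n s * ww p n s = -((p : ℤ) + n) := by
  have h : ∀ s ∈ (univ : Finset (II p n)), cQ1 p n s * ww p n s
      = -1 + (if s = kk0 then 1 else 0) + (if s = kk1 then 1 else 0) := by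
    intro s _
    simp only [ww, cQ1]
    split_ifs <;> subst_vars <;> (try simp_all [kk0, kk1, Fin.ext_iff]) <;> (try ring)
  rw [Finset.sum_congr rfl h]
  simp only [Finset.sum_add_distrib, Finset.sum_const, Finset.sum_ite_eq', mem_univ, if_pos,
    Finset.card_univ, card_II]
  push_cast
  ring

lemma P21_apply (p n : ℕ) (x y : II p n) :
    (P2 p n * P1 p n) x y
      = P1 p n x y + (if x = kk1 then ww p n y + (if y = kk0 then -((p:ℤ)+n) else 0) else 0) := by
  rw [mul_apply]
  by_cases hx : x = kk1
  · subst hx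
    have h : ∀ s ∈ (univ : Finset (II p n)), P2 p n kk1 s * P1 p n s y
        = (if s = kk1 then P1 p n kk1 y else 0)
          + ((if s = y then ww p n y else 0) + (ww p n s * vP1 p n s) * (if y = kk0 then 1 else 0)) := by
      intro s _
      simp only [P2_apply, P1_apply]
      split_ifs <;> subst_vars <;> (try simp_all [ww, vP1, kk0, kk1, Fin.ext_iff]) <;> (try ring)
    rw [Finset.sum_congr rfl h]
    simp only [Finset.sum_add_distrib, Finset.sum_ite_eq', mem_univ, if_pos, ← Finset.sum_mul,
      sum_ww_vP1, if_pos rfl]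
    split_ifs <;> try ring
  · have h : ∀ s ∈ (univ : Finset (II p n)), P2 p n x s * P1 p n s y
        = (if s = x then P1 p n x y else 0) := by
      intro s _
      simp only [P2_apply, P1_apply]
      split_ifs <;> subst_vars <;> (try simp_all [ww, vP1, kk0, kk1, Fin.ext_iff]) <;> (try ring)
    rw [Finset.sum_congr rfl h]
    simp [Finset.sum_ite_eq', hx]

lemma Pt_factor (p n : ℕ) : Pt p n = P3 p n * (P2 p n * P1 p n) := by
  ext x y
  rw [mul_apply]
  by_cases hx0 : x = kk0
  · subst hx0
    have h : ∀ s ∈ (univ : Finset (II p n)), P3 p n kk0 s * (P2 p n * P1 p n) s y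
        = (if s = kk0 then -((P2 p n * P1 p n) kk0 y) else 0) := by
      intro s _
      rw [P3_apply]
      split_ifs <;> subst_vars <;> (try simp_all [kk0, kk1, Fin.ext_iff]) <;> (try ring)
    rw [Finset.sum_congr rfl h, Finset.sum_ite_eq' univ kk0 _]
    simp only [mem_univ, if_pos, P21_apply, P1_apply, if_neg kk01, vP1, if_pos rfl, Pt, of_apply,
      if_neg (show (kk0 : II p n) ≠ kk1 from kk01)]
    clear h
    split_ifs <;> subst_vars <;> (try simp_all [kk0, kk1, Fin.ext_iff]) <;> (try ring)
  · have h : ∀ s ∈ (univ : Finset (II p n)), P3 p n x s * (P2 p n * P1 p n) s y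
        = (if s = x then (P2 p n * P1 p n) x y else 0) := by
      intro s _
      rw [P3_apply]
      split_ifs <;> subst_vars <;> (try simp_all) <;> (try ring)
    rw [Finset.sum_congr rfl h, Finset.sum_ite_eq' univ x _]
    simp only [mem_univ, if_pos, P21_apply, P1_apply, Pt, of_apply, vP1]
    split_ifs <;> subst_vars <;> (try simp_all [eq_comm, ww, kk0, kk1, Fin.ext_iff]) <;> (try ring)

lemma Qt_factor (p n : ℕ) : Qt p n = Q1 p n * Q2 p n := by
  ext x y
  rw [mul_apply]
  by_cases hx : x = kk1
  · subst hx
    have h : ∀ s ∈ (univ : Finset (II p n)), Q1 p n kk1 s * Q2 p n s y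
        = (if s = kk1 then Q2 p n kk1 y else 0)
          + ((if s = y then cQ1 p n y else 0) + (cQ1 p n s * ww p n s) * (if y = kk0 then 1 else 0)) := by
      intro s _
      simp only [Q1_apply, Q2_apply]
      split_ifs <;> subst_vars <;> (try simp_all [ww, cQ1, kk0, kk1, Fin.ext_iff]) <;> (try ring)
    rw [Finset.sum_congr rfl h]
    simp only [Finset.sum_add_distrib, Finset.sum_ite_eq', mem_univ, if_pos, ← Finset.sum_mul,
      sum_ww_cQ1]
    rw [Q2_apply]
    simp only [Qt, of_apply]
    clear h
    split_ifs <;> subst_vars <;> (try simp_all [ww, cQ1, kk0, kk1, Fin.ext_iff]) <;> (try ring)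
  · have h : ∀ s ∈ (univ : Finset (II p n)), Q1 p n x s * Q2 p n s y
        = (if s = x then Q2 p n x y else 0) := by
      intro s _
      simp only [Q1_apply, Q2_apply]
      split_ifs <;> subst_vars <;> (try simp_all) <;> (try ring)
    rw [Finset.sum_congr rfl h, Finset.sum_ite_eq' univ x _]
    rw [Q2_apply]
    simp only [Qt, of_apply, mem_univ, if_pos]
    clear h
    split_ifs <;> subst_vars <;> (try simp_all [ww, kk0, kk1, Fin.ext_iff]) <;> (try ring)

lemma ek_dot {p n : ℕ} (f : II p n → ℤ) (z : II p n) : ek z ⬝ᵥ f = f z := by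
  rw [dotProduct]
  have h : ∀ s ∈ (univ : Finset (II p n)), ek z s * f s = if s = z then f z else 0 := by
    intro s _
    simp only [ek, ite_mul, one_mul, zero_mul]
    split_ifs with h
    · rw [h]
    · rfl
  rw [Finset.sum_congr rfl h, Finset.sum_ite_eq']
  simp

lemma dot_ek {p n : ℕ} (f : II p n → ℤ) (z : II p n) : f ⬝ᵥ ek z = f z := by
  rw [dotProduct]
  have h : ∀ s ∈ (univ : Finset (II p n)), f s * ek z s = if s = z then f z else 0 := by
    intro s _
    simp only [ek, mul_ite, mul_one, mul_zero]
    split_ifs with h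
    · rw [h]
    · rfl
  rw [Finset.sum_congr rfl h, Finset.sum_ite_eq']
  simp

lemma det_Pt (p n : ℕ) : (Pt p n).det = -1 := by
  rw [Pt_factor, det_mul, det_mul]
  rw [P1, P2, P3, det_one_add_replicateCol_mul_replicateRow, det_one_add_replicateCol_mul_replicateRow, det_one_add_replicateCol_mul_replicateRow]
  rw [ek_dot, ek_dot, dot_ek]
  simp [vP1, ww, kk01, Ne.symm kk01]

lemma det_Qt (p n : ℕ) : (Qt p n).det = 1 := by
  rw [Qt_factor, det_mul]
  rw [Q1, Q2, det_one_add_replicateCol_mul_replicateRow, det_one_add_replicateCol_mul_replicateRow]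
  rw [ek_dot, dot_ek]
  simp [cQ1, ww, kk01, Ne.symm kk01]


/-! ### The join graph and its Laplacian -/

section GraphPart

variable {p n : ℕ} (G : SimpleGraph (Fin n)) [DecidableRel G.Adj]

/-- Laplacian of the join, as an integer matrix on `II p n`. -/
abbrev LL (p : ℕ) {n : ℕ} (G : SimpleGraph (Fin n)) [DecidableRel G.Adj] :
    Matrix (II p n) (II p n) ℤ :=
  (graphJoin (⊤ : SimpleGraph (Fin (p+2))) G).lapMatrix ℤ

lemma graphJoin_adj_ll (i j : Fin (p+2)) :
    (graphJoin (⊤ : SimpleGraph (Fin (p+2))) G).Adj (Sum.inl i) (Sum.inl j) ↔ ¬ j = i :=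
  (Iff.rfl : _ ↔ i ≠ j).trans ne_comm

lemma graphJoin_adj_lr (i : Fin (p+2)) (w : Fin n) :
    (graphJoin (⊤ : SimpleGraph (Fin (p+2))) G).Adj (Sum.inl i) (Sum.inr w) ↔ True :=
  iff_true_intro trivial

lemma graphJoin_adj_rl (v : Fin n) (j : Fin (p+2)) :
    (graphJoin (⊤ : SimpleGraph (Fin (p+2))) G).Adj (Sum.inr v) (Sum.inl j) ↔ True :=
  iff_true_intro trivial

lemma graphJoin_adj_rr (v w : Fin n) :
    (graphJoin (⊤ : SimpleGraph (Fin (p+2))) G).Adj (Sum.inr v) (Sum.inr w) ↔ G.Adj v w :=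
  Iff.rfl

lemma lap_apply {V : Type*} [Fintype V] [DecidableEq V] (H : SimpleGraph V)
    [DecidableRel H.Adj] (x y : V) :
    H.lapMatrix ℤ x y
      = (if x = y then (H.degree x : ℤ) else 0) - (if H.Adj x y then 1 else 0) := by
  simp [lapMatrix, degMatrix, Matrix.diagonal, Matrix.sub_apply]

lemma deg_inl (i : Fin (p+2)) :
    (((graphJoin (⊤ : SimpleGraph (Fin (p+2))) G).degree (Sum.inl i)) : ℤ) = (p:ℤ) + 1 + n := by
  rw [degree_eq_sum_if_adj, Fintype.sum_sum_type]
  have h1 : ∀ j ∈ (univ : Finset (Fin (p+2))),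
      (if (graphJoin (⊤ : SimpleGraph (Fin (p+2))) G).Adj (Sum.inl i) (Sum.inl j) then (1:ℤ) else 0)
        = 1 - (if j = i then 1 else 0) := by
    intro j _
    simp only [graphJoin_adj_ll]
    by_cases h : j = i
    · simp [h]
    · simp [h]
  have h2 : ∀ w ∈ (univ : Finset (Fin n)),
      (if (graphJoin (⊤ : SimpleGraph (Fin (p+2))) G).Adj (Sum.inl i) (Sum.inr w) then (1:ℤ) else 0)
        = 1 := fun w _ => by simp [graphJoin_adj_lr]
  rw [Finset.sum_congr rfl h1, Finset.sum_congr rfl h2]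
  simp only [Finset.sum_sub_distrib, Finset.sum_const, Finset.sum_ite_eq', mem_univ, if_pos,
    Finset.card_univ, Fintype.card_fin, nsmul_eq_mul, mul_one]
  push_cast
  ring

lemma deg_inr (v : Fin n) :
    (((graphJoin (⊤ : SimpleGraph (Fin (p+2))) G).degree (Sum.inr v)) : ℤ)
      = (p:ℤ) + 2 + (G.degree v : ℤ) := by
  rw [degree_eq_sum_if_adj, Fintype.sum_sum_type]
  have h1 : ∀ i ∈ (univ : Finset (Fin (p+2))),
      (if (graphJoin (⊤ : SimpleGraph (Fin (p+2))) G).Adj (Sum.inr v) (Sum.inl i) then (1:ℤ) else 0)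
        = 1 := fun i _ => by simp [graphJoin_adj_rl]
  have h2 : ∀ w ∈ (univ : Finset (Fin n)),
      (if (graphJoin (⊤ : SimpleGraph (Fin (p+2))) G).Adj (Sum.inr v) (Sum.inr w) then (1:ℤ) else 0)
        = (if G.Adj v w then (1:ℤ) else 0) := by
    intro w _
    simp only [graphJoin_adj_rr]
  rw [Finset.sum_congr rfl h1, Finset.sum_congr rfl h2, ← degree_eq_sum_if_adj]
  simp only [Finset.sum_const, Finset.card_univ, Fintype.card_fin, nsmul_eq_mul, mul_one]
  push_cast
  ring

lemma deg_compl_int (v : Fin n) :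
    ((Gᶜ.degree v : ℤ)) = (n : ℤ) - 1 - (G.degree v : ℤ) := by
  have h1 := G.degree_lt_card_verts v
  have h2 : Gᶜ.degree v = Fintype.card (Fin n) - 1 - G.degree v := G.degree_compl v
  simp only [Fintype.card_fin] at h1 h2
  omega

lemma LL_ll (i j : Fin (p+2)) :
    LL p G (Sum.inl i) (Sum.inl j) = if i = j then ((p:ℤ)+1+n) else -1 := by
  simp only [LL]
  rw [lap_apply]
  simp only [graphJoin_adj_ll]
  by_cases h : i = j
  · subst h
    rw [if_pos rfl, if_pos rfl, if_neg (not_not_intro rfl), deg_inl]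
    ring
  · rw [if_neg (by simp [h]), if_pos (fun e => h e.symm), if_neg h]
    ring

lemma LL_lr (i : Fin (p+2)) (w : Fin n) : LL p G (Sum.inl i) (Sum.inr w) = -1 := by
  simp only [LL]
  rw [lap_apply, if_neg (by simp)]
  simp [graphJoin_adj_lr]

lemma LL_rl (v : Fin n) (j : Fin (p+2)) : LL p G (Sum.inr v) (Sum.inl j) = -1 := by
  simp only [LL]
  rw [lap_apply, if_neg (by simp)]
  simp [graphJoin_adj_rl]

lemma LL_rr (v w : Fin n) :
    LL p G (Sum.inr v) (Sum.inr w) + 1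
      = ((p:ℤ)+2+n) * (if v = w then 1 else 0) - Gᶜ.lapMatrix ℤ v w := by
  simp only [LL]
  rw [lap_apply, lap_apply Gᶜ]
  simp only [graphJoin_adj_rr]
  by_cases h : v = w
  · subst h
    rw [if_pos rfl, if_pos rfl, if_pos rfl, if_neg (G.irrefl (v := v)),
      if_neg (Gᶜ.irrefl (v := v)), deg_inr, deg_compl_int]
    ring
  · rw [if_neg (by simp [h]), if_neg h, if_neg h]
    by_cases hA : G.Adj v w
    · rw [if_pos hA, if_neg (show ¬ Gᶜ.Adj v w from fun hc => hc.2 hA)]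
      ring
    · rw [if_neg hA, if_pos (show Gᶜ.Adj v w from ⟨h, hA⟩)]
      ring

end GraphPart

section MainComp

variable {p n : ℕ} (G : SimpleGraph (Fin n)) [DecidableRel G.Adj]

lemma kk0_def : (kk0 : II p n) = Sum.inl 0 := rfl
lemma kk1_def : (kk1 : II p n) = Sum.inl 1 := rfl

lemma rowsum (x : II p n) : ∑ t, LL p G x t = 0 := by
  have h := congrFun
    ((graphJoin (⊤ : SimpleGraph (Fin (p+2))) G).lapMatrix_mulVec_const_eq_zero (R := ℤ)) x
  simpa [mulVec, dotProduct] using h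

lemma symmLL (s y : II p n) : LL p G s y = LL p G y s :=
  congrFun (congrFun (isSymm_lapMatrix (R := ℤ) (graphJoin (⊤ : SimpleGraph (Fin (p+2))) G)) y) s

lemma colsum (y : II p n) : ∑ s, LL p G s y = 0 := by
  rw [Finset.sum_congr rfl fun s _ => symmLL G s y]
  exact rowsum G y

lemma Pt_mul_apply (M : Matrix (II p n) (II p n) ℤ) (x y : II p n) :
    (Pt p n * M) x y
      = if x = kk1 then (∑ s, M s y)
        else if x = kk0 then -(M kk0 y) else M x y - M kk0 y := by
  rw [mul_apply]
  by_cases h1 : x = kk1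
  · subst h1
    rw [if_pos rfl]
    exact Finset.sum_congr rfl fun s _ => by simp [Pt]
  · rw [if_neg h1]
    by_cases h0 : x = kk0
    · subst h0
      rw [if_pos rfl]
      have h : ∀ s ∈ (univ : Finset (II p n)), Pt p n kk0 s * M s y
          = if s = kk0 then -(M kk0 y) else 0 := by
        intro s _
        simp only [Pt, of_apply, if_neg kk01, if_pos rfl]
        split_ifs <;> subst_vars <;> (try simp_all) <;> (try ring)
      rw [Finset.sum_congr rfl h, Finset.sum_ite_eq']
      simp
    · rw [if_neg h0]
      have h : ∀ s ∈ (univ : Finset (II p n)), Pt p n x s * M s y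
          = (if s = x then M x y else 0) + (if s = kk0 then -(M kk0 y) else 0) := by
        intro s _
        simp only [Pt, of_apply, if_neg h1, if_neg h0]
        split_ifs <;> subst_vars <;> (try simp_all) <;> (try ring)
      rw [Finset.sum_congr rfl h, Finset.sum_add_distrib, Finset.sum_ite_eq', Finset.sum_ite_eq']
      simp [sub_eq_add_neg]

lemma mul_Qt_apply (M : Matrix (II p n) (II p n) ℤ) (x y : II p n) :
    (M * Qt p n) x y
      = if y = kk0 then (∑ t, M x t)
        else if y = kk1 then M x kk1 else M x y - M x kk1 := by
  rw [mul_apply]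
  by_cases h0 : y = kk0
  · subst h0
    rw [if_pos rfl]
    exact Finset.sum_congr rfl fun t _ => by simp [Qt]
  · rw [if_neg h0]
    by_cases h1 : y = kk1
    · subst h1
      rw [if_pos rfl]
      have h : ∀ t ∈ (univ : Finset (II p n)), M x t * Qt p n t kk1
          = if t = kk1 then M x kk1 else 0 := by
        intro t _
        simp only [Qt, of_apply, if_neg (Ne.symm kk01), if_pos rfl]
        split_ifs <;> subst_vars <;> (try simp_all) <;> (try ring)
      rw [Finset.sum_congr rfl h, Finset.sum_ite_eq']
      simp
    · rw [if_neg h1]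
      have h : ∀ t ∈ (univ : Finset (II p n)), M x t * Qt p n t y
          = (if t = y then M x y else 0) + (if t = kk1 then -(M x kk1) else 0) := by
        intro t _
        simp only [Qt, of_apply, if_neg h0, if_neg h1]
        split_ifs <;> subst_vars <;> (try simp_all) <;> (try ring)
      rw [Finset.sum_congr rfl h, Finset.sum_add_distrib, Finset.sum_ite_eq', Finset.sum_ite_eq']
      simp [sub_eq_add_neg]

lemma LL_x_k1 (x : II p n) (hx : x ≠ kk1) : LL p G x kk1 = -1 := by
  rcases x with i | v
  · have hi : i ≠ 1 := fun e => hx (by simp [kk1_def, e])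
    rw [kk1_def, LL_ll, if_neg hi]
  · rw [kk1_def, LL_rl]

lemma LL_k0_y (y : II p n) (hy : y ≠ kk0) : LL p G kk0 y = -1 := by
  rcases y with j | w
  · have hj : (0 : Fin (p+2)) ≠ j := fun e => hy (by simp [kk0_def, ← e])
    rw [kk0_def, LL_ll, if_neg hj]
  · exact LL_lr G 0 w

lemma PL_col_k1 (x : II p n) :
    (Pt p n * LL p G) x kk1 = if x = kk0 then 1 else 0 := by
  rw [Pt_mul_apply]
  by_cases h1 : x = kk1
  · subst h1
    rw [if_pos rfl, colsum, if_neg (Ne.symm kk01)]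
  · rw [if_neg h1]
    by_cases h0 : x = kk0
    · subst h0
      rw [if_pos rfl, if_pos rfl, LL_k0_y G kk1 (Ne.symm kk01)]
      norm_num
    · rw [if_neg h0, if_neg h0, LL_x_k1 G x h1, LL_k0_y G kk1 (Ne.symm kk01)]
      ring

lemma PL_rowsum (x : II p n) : ∑ t, (Pt p n * LL p G) x t = 0 := by
  by_cases h1 : x = kk1
  · subst h1
    have h : ∀ t ∈ (univ : Finset (II p n)), (Pt p n * LL p G) kk1 t = ∑ s, LL p G s t :=
      fun t _ => by rw [Pt_mul_apply, if_pos rfl]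
    rw [Finset.sum_congr rfl h, Finset.sum_comm]
    exact Finset.sum_eq_zero fun s _ => rowsum G s
  · by_cases h0 : x = kk0
    · subst h0
      have h : ∀ t ∈ (univ : Finset (II p n)), (Pt p n * LL p G) kk0 t = -(LL p G kk0 t) :=
        fun t _ => by rw [Pt_mul_apply, if_neg kk01, if_pos rfl]
      rw [Finset.sum_congr rfl h, Finset.sum_neg_distrib, rowsum]
      ring
    · have h : ∀ t ∈ (univ : Finset (II p n)), (Pt p n * LL p G) x t
          = LL p G x t - LL p G kk0 t :=
        fun t _ => by rw [Pt_mul_apply, if_neg h1, if_neg h0]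
      rw [Finset.sum_congr rfl h, Finset.sum_sub_distrib, rowsum, rowsum]
      ring

lemma N_apply (x y : II p n) :
    (Pt p n * LL p G * Qt p n) x y
      = if y = kk0 then 0
        else if y = kk1 then (if x = kk0 then 1 else 0)
        else (Pt p n * LL p G) x y - (if x = kk0 then 1 else 0) := by
  rw [mul_Qt_apply]
  by_cases h0 : y = kk0
  · subst h0
    rw [if_pos rfl, if_pos rfl]
    exact PL_rowsum G x
  · rw [if_neg h0, if_neg h0]
    by_cases h1 : y = kk1
    · subst h1
      rw [if_pos rfl, if_pos rfl, PL_col_k1 G x]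
    · rw [if_neg h1, if_neg h1, PL_col_k1 G x]

end MainComp

section Equivs

def rowEquiv (p n : ℕ) : II p n ≃ (Fin n ⊕ (Fin p ⊕ (Fin 1 ⊕ Fin 1))) where
  toFun x :=
    match x with
    | Sum.inr v => Sum.inl v
    | Sum.inl i =>
      if h0 : (i : ℕ) = 0 then Sum.inr (Sum.inr (Sum.inl 0))
      else if h1 : (i : ℕ) = 1 then Sum.inr (Sum.inr (Sum.inr 0))
      else Sum.inr (Sum.inl ⟨(i : ℕ) - 2, by have := i.isLt; omega⟩)
  invFun y :=
    match y with
    | Sum.inl v => Sum.inr v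
    | Sum.inr (Sum.inl j) => Sum.inl ⟨(j : ℕ) + 2, by have := j.isLt; omega⟩
    | Sum.inr (Sum.inr (Sum.inl _)) => Sum.inl 0
    | Sum.inr (Sum.inr (Sum.inr _)) => Sum.inl 1
  left_inv := by
    rintro (i | v)
    · dsimp only
      split_ifs with h0 h1
      · exact congrArg Sum.inl (Fin.ext (by simp only [Fin.val_zero]; omega))
      · exact congrArg Sum.inl (Fin.ext (by simp only [Fin.val_one]; omega))
      · exact congrArg Sum.inl (Fin.ext (by have := i.isLt; dsimp only; omega))
    · rfl
  right_inv := by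
    rintro (v | (j | (s | s)))
    · rfl
    · have hj := j.isLt
      dsimp only
      split_ifs <;>
        first
          | contradiction
          | (exfalso; omega)
          | exact congrArg (fun t => Sum.inr (Sum.inl t)) (Fin.ext (by dsimp only; omega))
    · have hs : s = 0 := Subsingleton.elim s 0
      subst hs
      dsimp only
      split_ifs <;>
        first
          | rfl
          | contradiction
          | (exfalso; simp_all)
    · have hs : s = 0 := Subsingleton.elim s 0
      subst hs
      dsimp only
      split_ifs <;>
        first
          | rfl
          | contradiction
          | (exfalso; simp_all)

def colEquiv (p n : ℕ) : II p n ≃ (Fin n ⊕ (Fin p ⊕ (Fin 1 ⊕ Fin 1))) where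
  toFun x :=
    match x with
    | Sum.inr v => Sum.inl v
    | Sum.inl i =>
      if h0 : (i : ℕ) = 0 then Sum.inr (Sum.inr (Sum.inr 0))
      else if h1 : (i : ℕ) = 1 then Sum.inr (Sum.inr (Sum.inl 0))
      else Sum.inr (Sum.inl ⟨(i : ℕ) - 2, by have := i.isLt; omega⟩)
  invFun y :=
    match y with
    | Sum.inl v => Sum.inr v
    | Sum.inr (Sum.inl j) => Sum.inl ⟨(j : ℕ) + 2, by have := j.isLt; omega⟩
    | Sum.inr (Sum.inr (Sum.inl _)) => Sum.inl 1
    | Sum.inr (Sum.inr (Sum.inr _)) => Sum.inl 0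
  left_inv := by
    rintro (i | v)
    · dsimp only
      split_ifs with h0 h1
      · exact congrArg Sum.inl (Fin.ext (by simp only [Fin.val_zero]; omega))
      · exact congrArg Sum.inl (Fin.ext (by simp only [Fin.val_one]; omega))
      · exact congrArg Sum.inl (Fin.ext (by have := i.isLt; dsimp only; omega))
    · rfl
  right_inv := by
    rintro (v | (j | (s | s)))
    · rfl
    · have hj := j.isLt
      dsimp only
      split_ifs <;>
        first
          | contradiction
          | (exfalso; omega)
          | exact congrArg (fun t => Sum.inr (Sum.inl t)) (Fin.ext (by dsimp only; omega))
    · have hs : s = 0 := Subsingleton.elim s 0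
      subst hs
      dsimp only
      split_ifs <;>
        first
          | rfl
          | contradiction
          | (exfalso; simp_all)
    · have hs : s = 0 := Subsingleton.elim s 0
      subst hs
      dsimp only
      split_ifs <;>
        first
          | rfl
          | contradiction
          | (exfalso; simp_all)

variable {p n : ℕ}

@[simp] lemma rowEquiv_symm_v (v : Fin n) : (rowEquiv p n).symm (Sum.inl v) = Sum.inr v := rfl
@[simp] lemma rowEquiv_symm_j (j : Fin p) :
    (rowEquiv p n).symm (Sum.inr (Sum.inl j))
      = Sum.inl ⟨(j : ℕ) + 2, by have := j.isLt; omega⟩ := rfl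
@[simp] lemma rowEquiv_symm_a (s : Fin 1) :
    (rowEquiv p n).symm (Sum.inr (Sum.inr (Sum.inl s))) = kk0 := rfl
@[simp] lemma rowEquiv_symm_b (s : Fin 1) :
    (rowEquiv p n).symm (Sum.inr (Sum.inr (Sum.inr s))) = kk1 := rfl

@[simp] lemma colEquiv_symm_v (v : Fin n) : (colEquiv p n).symm (Sum.inl v) = Sum.inr v := rfl
@[simp] lemma colEquiv_symm_j (j : Fin p) :
    (colEquiv p n).symm (Sum.inr (Sum.inl j))
      = Sum.inl ⟨(j : ℕ) + 2, by have := j.isLt; omega⟩ := rfl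
@[simp] lemma colEquiv_symm_a (s : Fin 1) :
    (colEquiv p n).symm (Sum.inr (Sum.inr (Sum.inl s))) = kk1 := rfl
@[simp] lemma colEquiv_symm_b (s : Fin 1) :
    (colEquiv p n).symm (Sum.inr (Sum.inr (Sum.inr s))) = kk0 := rfl

end Equivs

section KeyPart

variable {p n : ℕ} (G : SimpleGraph (Fin n)) [DecidableRel G.Adj]

/-- The target block-diagonal matrix. -/
def Bmat (p n : ℕ) (G : SimpleGraph (Fin n)) [DecidableRel G.Adj] :
    Matrix (Fin n ⊕ (Fin p ⊕ (Fin 1 ⊕ Fin 1))) (Fin n ⊕ (Fin p ⊕ (Fin 1 ⊕ Fin 1))) ℤ :=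
  Matrix.fromBlocks
    ((((p + 2 : ℕ) : ℤ) + (n : ℕ)) • (1 : Matrix (Fin n) (Fin n) ℤ) - Gᶜ.lapMatrix ℤ) 0 0
    (Matrix.fromBlocks
      ((((p + 2 : ℕ) : ℤ) + (n : ℕ)) • (1 : Matrix (Fin p) (Fin p) ℤ)) 0 0
      (Matrix.fromBlocks
        (1 : Matrix (Fin 1) (Fin 1) ℤ) 0 0
        (0 : Matrix (Fin 1) (Fin 1) ℤ)))

lemma inr_ne_kk0 (v : Fin n) : (Sum.inr v : II p n) ≠ kk0 := by simp [kk0_def]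
lemma inr_ne_kk1 (v : Fin n) : (Sum.inr v : II p n) ≠ kk1 := by simp [kk1_def]
lemma mk_ne_kk0 (j : ℕ) (h : j + 2 < p + 2) :
    (Sum.inl ⟨j + 2, h⟩ : II p n) ≠ kk0 := by simp [kk0_def, Fin.ext_iff]
lemma mk_ne_kk1 (j : ℕ) (h : j + 2 < p + 2) :
    (Sum.inl ⟨j + 2, h⟩ : II p n) ≠ kk1 := by simp [kk1_def, Fin.ext_iff]

lemma ifself {α : Type*} {c : Prop} {inst : Decidable c} (hc : c) (a b : α) :
    @ite _ c inst a b = a := if_pos hc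

lemma key (x y : Fin n ⊕ (Fin p ⊕ (Fin 1 ⊕ Fin 1))) :
    (Pt p n * LL p G * Qt p n) ((rowEquiv p n).symm x) ((colEquiv p n).symm y)
      = Bmat p n G x y := by
  rcases x with v | (i | (s | s)) <;> rcases y with w | (j | (t | t)) <;>
    simp only [rowEquiv_symm_v, rowEquiv_symm_j, rowEquiv_symm_a, rowEquiv_symm_b,
      colEquiv_symm_v, colEquiv_symm_j, colEquiv_symm_a, colEquiv_symm_b]
  -- (v, w)
  · rw [N_apply, if_neg (inr_ne_kk0 w), if_neg (inr_ne_kk1 w), if_neg (inr_ne_kk0 v),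
      Pt_mul_apply, if_neg (inr_ne_kk1 v), if_neg (inr_ne_kk0 v), LL_k0_y G _ (inr_ne_kk0 w)]
    simp only [Bmat, Matrix.fromBlocks_apply₁₁, Matrix.sub_apply, Matrix.smul_apply,
      Matrix.one_apply, smul_eq_mul]
    have h := LL_rr (p := p) G v w
    push_cast at h ⊢
    linarith
  -- (v, j)
  · rw [N_apply, if_neg (mk_ne_kk0 _ _), if_neg (mk_ne_kk1 _ _), if_neg (inr_ne_kk0 v),
      Pt_mul_apply, if_neg (inr_ne_kk1 v), if_neg (inr_ne_kk0 v), LL_rl,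
      LL_k0_y G _ (mk_ne_kk0 _ _)]
    simp [Bmat]
  -- (v, a)
  · rw [N_apply, if_neg (Ne.symm kk01), ifself rfl, if_neg (inr_ne_kk0 v)]
    simp [Bmat]
  -- (v, b)
  · rw [N_apply, ifself rfl]
    simp [Bmat]
  -- (i, w)
  · rw [N_apply, if_neg (inr_ne_kk0 w), if_neg (inr_ne_kk1 w), if_neg (mk_ne_kk0 _ _),
      Pt_mul_apply, if_neg (mk_ne_kk1 _ _), if_neg (mk_ne_kk0 _ _), LL_lr,
      LL_k0_y G _ (inr_ne_kk0 w)]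
    simp [Bmat]
  -- (i, j)
  · rw [N_apply, if_neg (mk_ne_kk0 _ _), if_neg (mk_ne_kk1 _ _), if_neg (mk_ne_kk0 _ _),
      Pt_mul_apply, if_neg (mk_ne_kk1 _ _), if_neg (mk_ne_kk0 _ _),
      LL_k0_y G _ (mk_ne_kk0 _ _), LL_ll]
    simp only [Bmat, Matrix.fromBlocks_apply₂₂, Matrix.fromBlocks_apply₁₁, Matrix.smul_apply,
      Matrix.one_apply, smul_eq_mul]
    by_cases hij : i = j
    · subst hij
      rw [ifself rfl, ifself rfl]
      push_cast
      ring
    · have hv : (i : ℕ) ≠ (j : ℕ) := fun e => hij (Fin.ext e)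
      have hne : (⟨(i:ℕ)+2, by have := i.isLt; omega⟩ : Fin (p+2))
          ≠ ⟨(j:ℕ)+2, by have := j.isLt; omega⟩ := by
        intro e
        exact hv (by have h2 := congrArg Fin.val e; dsimp only at h2; omega)
      rw [if_neg hne, if_neg hij]
      ring
  -- (i, a)
  · rw [N_apply, if_neg (Ne.symm kk01), ifself rfl, if_neg (mk_ne_kk0 _ _)]
    simp [Bmat]
  -- (i, b)
  · rw [N_apply, ifself rfl]
    simp [Bmat]
  -- (a, w)
  · rw [N_apply, if_neg (inr_ne_kk0 w), if_neg (inr_ne_kk1 w), ifself rfl,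
      Pt_mul_apply, if_neg kk01, ifself rfl, LL_k0_y G _ (inr_ne_kk0 w)]
    simp [Bmat]
  -- (a, j)
  · rw [N_apply, if_neg (mk_ne_kk0 _ _), if_neg (mk_ne_kk1 _ _), ifself rfl,
      Pt_mul_apply, if_neg kk01, ifself rfl, LL_k0_y G _ (mk_ne_kk0 _ _)]
    simp [Bmat]
  -- (a, a)
  · rw [N_apply, if_neg (Ne.symm kk01), ifself rfl, ifself rfl]
    simp [Bmat, Subsingleton.elim s t]
  -- (a, b)
  · rw [N_apply, ifself rfl]
    simp [Bmat]
  -- (b, w)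
  · rw [N_apply, if_neg (inr_ne_kk0 w), if_neg (inr_ne_kk1 w),
      Pt_mul_apply, ifself rfl, colsum, if_neg (Ne.symm kk01)]
    simp [Bmat]
  -- (b, j)
  · rw [N_apply, if_neg (mk_ne_kk0 _ _), if_neg (mk_ne_kk1 _ _),
      Pt_mul_apply, ifself rfl, colsum, if_neg (Ne.symm kk01)]
    simp [Bmat]
  -- (b, a)
  · rw [N_apply, if_neg (Ne.symm kk01), ifself rfl, if_neg (Ne.symm kk01)]
    simp [Bmat]
  -- (b, b)
  · rw [N_apply, ifself rfl]
    simp [Bmat]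

end KeyPart



theorem main_aux (p n : ℕ) (G : SimpleGraph (Fin n)) [DecidableRel G.Adj] :
    MatrixUnimodEquiv ((graphJoin (⊤ : SimpleGraph (Fin (p+2))) G).lapMatrix ℤ) (Bmat p n G) := by
  refine ⟨rowEquiv p n, colEquiv p n,
    (Pt p n).submatrix (rowEquiv p n).symm (rowEquiv p n).symm,
    (Qt p n).submatrix (colEquiv p n).symm (colEquiv p n).symm, ?_, ?_, ?_⟩
  · right
    rw [Matrix.det_submatrix_equiv_self]
    exact det_Pt p n
  · left
    rw [Matrix.det_submatrix_equiv_self]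
    exact det_Qt p n
  · rw [Matrix.reindex_apply,
      Matrix.submatrix_mul_equiv (Pt p n) ((graphJoin (⊤ : SimpleGraph (Fin (p+2))) G).lapMatrix ℤ)
        (rowEquiv p n).symm (rowEquiv p n).symm (colEquiv p n).symm,
      Matrix.submatrix_mul_equiv (Pt p n * (graphJoin (⊤ : SimpleGraph (Fin (p+2))) G).lapMatrix ℤ)
        (Qt p n) (rowEquiv p n).symm (colEquiv p n).symm (colEquiv p n).symm]
    ext x y
    rw [Matrix.submatrix_apply]
    exact key G x y

end LapJoinAux

/-- Lemma 2.1: `L(K_m ∨ G) ∼ ((m+n)Iₙ − L(Gᶜ)) ⊕ (m+n)I_{m−2} ⊕ I₁ ⊕ 0₁`. -/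
theorem lap_join_complete_equiv (m n : ℕ) (hm : 2 ≤ m) (hn : 1 ≤ n)
    (G : SimpleGraph (Fin n)) [DecidableRel G.Adj] :
    MatrixUnimodEquiv
      ((graphJoin (⊤ : SimpleGraph (Fin m)) G).lapMatrix ℤ)
      (Matrix.fromBlocks
        (((m : ℤ) + n) • (1 : Matrix (Fin n) (Fin n) ℤ) - Gᶜ.lapMatrix ℤ) 0 0
        (Matrix.fromBlocks
          (((m : ℤ) + n) • (1 : Matrix (Fin (m - 2)) (Fin (m - 2)) ℤ)) 0 0
          (Matrix.fromBlocks
            (1 : Matrix (Fin 1) (Fin 1) ℤ) 0 0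
            (0 : Matrix (Fin 1) (Fin 1) ℤ)))) := by
  obtain ⟨p, rfl⟩ : ∃ p, m = p + 2 := ⟨m - 2, by omega⟩
  exact LapJoinAux.main_aux p n G
end

section
/- Let m ≥ 1 and n ≥ 4 be integers and define the integer sequence (b_l) by b_1 = 0, b_2 = n−2, and b_l = (m+2)b_{l−1} − b_{l−2} + (n−l+1) for l ≥ 3. Then for all 1 ≤ l ≤ n, as real numbers, b_l = e·((m+2+√(m²+4m))/2)^l − f·((m+2−√(m²+4m))/2)^l − (n−l)/m, where e = (m² − m − (m+1)√(m²+4m) + 2mn)(m+4−√(m²+4m)) / (4m²(m+4)) and f = (m − m² − (m+1)√(m²+4m) − 2mn)(m+4+√(m²+4m)) / (4m²(m+4)). -/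
/-- The closed form of the sequence `b₁ = 0`, `b₂ = n−2`,
`b_l = (m+2)b_{l−1} − b_{l−2} + (n−l+1)`:
for `1 ≤ l ≤ n`, `b_l = e·((m+2+√(m²+4m))/2)^l − f·((m+2−√(m²+4m))/2)^l − (n−l)/m`. -/
theorem b_closed_form (m n : ℕ) (hm : 1 ≤ m) (hn : 4 ≤ n) (b : ℕ → ℤ)
    (hb1 : b 1 = 0) (hb2 : b 2 = (n : ℤ) - 2)
    (hb : ∀ l, 3 ≤ l → b l = ((m : ℤ) + 2) * b (l - 1) - b (l - 2) + ((n : ℤ) - l + 1))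
    (e f : ℝ)
    (he : e = ((m : ℝ) ^ 2 - m - (m + 1) * Real.sqrt ((m : ℝ) ^ 2 + 4 * m) + 2 * m * n) *
        ((m : ℝ) + 4 - Real.sqrt ((m : ℝ) ^ 2 + 4 * m)) / (4 * (m : ℝ) ^ 2 * (m + 4)))
    (hf : f = ((m : ℝ) - m ^ 2 - (m + 1) * Real.sqrt ((m : ℝ) ^ 2 + 4 * m) - 2 * m * n) *
        ((m : ℝ) + 4 + Real.sqrt ((m : ℝ) ^ 2 + 4 * m)) / (4 * (m : ℝ) ^ 2 * (m + 4))) :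
    ∀ l, 1 ≤ l → l ≤ n →
      (b l : ℝ) =
        e * (((m : ℝ) + 2 + Real.sqrt ((m : ℝ) ^ 2 + 4 * m)) / 2) ^ l -
          f * (((m : ℝ) + 2 - Real.sqrt ((m : ℝ) ^ 2 + 4 * m)) / 2) ^ l -
          ((n : ℝ) - l) / m := by
  have hm0 : (m : ℝ) ≠ 0 := Nat.cast_ne_zero.mpr (by omega)
  have hm4 : (m : ℝ) + 4 ≠ 0 := by positivity
  set s := Real.sqrt ((m : ℝ) ^ 2 + 4 * m) with hsdef
  have hs : s ^ 2 = (m : ℝ) ^ 2 + 4 * m := Real.sq_sqrt (by positivity)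
  set α := ((m : ℝ) + 2 + s) / 2 with hadef
  set β := ((m : ℝ) + 2 - s) / 2 with hbdef
  have hα : α ^ 2 = ((m : ℝ) + 2) * α - 1 := by
    rw [hadef]; linear_combination hs / 4
  have hβ : β ^ 2 = ((m : ℝ) + 2) * β - 1 := by
    rw [hbdef]; linear_combination hs / 4
  have h1 : e * α - f * β = ((n : ℝ) - 1) / m := by
    rw [he, hf, hadef, hbdef]
    field_simp
    linear_combination ((-2 : ℝ) * m - 2 * m ^ 2 - 4 * m * n - 4) * hs
  have h2 : e * α ^ 2 - f * β ^ 2 = ((n : ℝ) - 2) + ((n : ℝ) - 2) / m := by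
    rw [he, hf, hadef, hbdef]
    field_simp
    linear_combination ((-24 : ℝ) * m + 2 * m * s ^ 2 - 32 * m ^ 2 + 2 * m ^ 2 * s ^ 2
      - 6 * m ^ 3 - 4 * m ^ 3 * n - 2 * m ^ 4 + (2 - 2 * m ^ 2) * s ^ 2
      + (-16 * m + 24 * m ^ 2 - 4 * m ^ 2 * n + 12 * m ^ 3 + 4 * m ^ 3 * n + 4 * m ^ 4 - 24)
      + (2 - 2 * m ^ 2) * (m ^ 2 + 4 * m)) * hs
  have key : ∀ k : ℕ,
      (b (k + 1) : ℝ) = e * α ^ (k + 1) - f * β ^ (k + 1) - ((n : ℝ) - (k + 1)) / m ∧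
      (b (k + 2) : ℝ) = e * α ^ (k + 2) - f * β ^ (k + 2) - ((n : ℝ) - (k + 2)) / m := by
    intro k
    induction k with
    | zero =>
      constructor
      · rw [hb1]
        push_cast
        rw [pow_one]
        linear_combination -h1
      · rw [hb2]
        push_cast
        linear_combination -h2
    | succ k ih =>
      obtain ⟨ih1, ih2⟩ := ih
      refine ⟨?_, ?_⟩
      · rw [show k + 1 + 1 = k + 2 from rfl, ih2]; push_cast; ring
      have hrec := hb (k + 3) (by omega)
      have h1' : k + 3 - 1 = k + 2 := by omega
      have h2' : k + 3 - 2 = k + 1 := by omega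
      rw [h1', h2'] at hrec
      have : (b (k + 3) : ℝ) = ((m : ℝ) + 2) * b (k + 2) - b (k + 1) + ((n : ℝ) - (k + 3) + 1) := by
        rw [hrec]; push_cast; ring
      rw [show k + 1 + 2 = k + 3 from rfl, this, ih1, ih2]
      push_cast
      have hα3 : α ^ (k + 3) = ((m : ℝ) + 2) * α ^ (k + 2) - α ^ (k + 1) := by
        calc α ^ (k + 3) = α ^ (k + 1) * α ^ 2 := by ring
        _ = α ^ (k + 1) * (((m : ℝ) + 2) * α - 1) := by rw [hα]
        _ = ((m : ℝ) + 2) * α ^ (k + 2) - α ^ (k + 1) := by ring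
      have hβ3 : β ^ (k + 3) = ((m : ℝ) + 2) * β ^ (k + 2) - β ^ (k + 1) := by
        calc β ^ (k + 3) = β ^ (k + 1) * β ^ 2 := by ring
        _ = β ^ (k + 1) * (((m : ℝ) + 2) * β - 1) := by rw [hβ]
        _ = ((m : ℝ) + 2) * β ^ (k + 2) - β ^ (k + 1) := by ring
      rw [hα3, hβ3]
      push_cast
      field_simp
      ring
  intro l hl _
  obtain ⟨k, rfl⟩ : ∃ k, l = k + 1 := ⟨l - 1, by omega⟩
  have := (key k).1
  rw [this]
  push_cast
  ring
end

section
/- For all integers m ≥ 1 and n ≥ 1, the product ∏_{j=1}^{n−1} ( m + 2 + 2·cos(πj/n) ) equals (1 / (2^n · √(m²+4m))) · ( (m+2+√(m²+4m))^n − (m+2−√(m²+4m))^n ). -/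
set_option maxHeartbeats 1000000
open Real Finset

open Polynomial in
lemma aux_prod (n : ℕ) (hn : n ≠ 0) {μ : ℂ} (hμ : IsPrimitiveRoot μ n) (c : ℂ) :
    ∏ k ∈ Finset.range n, (c - μ ^ k) = c ^ n - 1 := by
  have h1 : (X ^ n - C (1:ℂ)).roots = (Multiset.range n).map (μ ^ ·) := by
    simpa [Polynomial.nthRoots] using hμ.nthRoots_eq (one_pow n)
  have h2 := (IsAlgClosed.splits _).eq_prod_roots_of_monic (monic_X_pow_sub_C (1:ℂ) hn)
  have h3 := congrArg (Polynomial.eval c) h2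
  rw [h1] at h3
  simp only [eval_sub, eval_pow, eval_X, eval_C, eval_multiset_prod, Multiset.map_map,
    Function.comp] at h3
  rw [show ∏ k ∈ Finset.range n, (c - μ ^ k)
      = ((Multiset.range n).map (fun k => c - μ ^ k)).prod from rfl, ← h3]

lemma key_prod (n : ℕ) (hn : 1 ≤ n) (z : ℝ) (hz : 1 < z) :
    ∏ j ∈ Finset.Ico 1 n, (z + z⁻¹ + 2 * Real.cos (Real.pi * j / n))
      = (z ^ n - (z⁻¹) ^ n) / (z - z⁻¹) := by
  have hn0 : (n:ℂ) ≠ 0 := Nat.cast_ne_zero.mpr (by omega)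
  have hz0 : z ≠ 0 := by linarith
  have hw0 : (z:ℂ) ≠ 0 := Complex.ofReal_ne_zero.mpr hz0
  have hw2 : (z:ℂ)^2 - 1 ≠ 0 := by
    have : (1:ℝ) < z^2 := by nlinarith
    intro h
    have : ((z:ℂ))^2 = 1 := by linear_combination h
    have : (z:ℝ)^2 = 1 := by exact_mod_cast this
    linarith
  set ζ : ℂ := Complex.exp (2 * Real.pi * Complex.I / ((2*n : ℕ) : ℂ)) with hζ
  have hprim : IsPrimitiveRoot ζ (2*n) := Complex.isPrimitiveRoot_exp _ (by omega)
  have hζpow : ∀ j : ℕ, ζ ^ j = Complex.exp ((Real.pi * j / n : ℝ) * Complex.I) := by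
    intro j
    rw [hζ, ← Complex.exp_nat_mul]
    congr 1
    push_cast
    field_simp
  have hζn : ζ ^ n = -1 := by
    rw [hζpow n]
    have hr : (Real.pi * n / n : ℝ) = Real.pi := by
      field_simp
    rw [hr, Complex.exp_pi_mul_I]
  -- full product
  have hfull : ∏ k ∈ Finset.range (2*n), ((z:ℂ) + ζ^k) = (z:ℂ)^(2*n) - 1 := by
    have h := aux_prod (2*n) (by omega) hprim (-(z:ℂ))
    calc ∏ k ∈ Finset.range (2*n), ((z:ℂ) + ζ^k)
        = ∏ k ∈ Finset.range (2*n), (-1) * (-(z:ℂ) - ζ^k) := by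
          apply Finset.prod_congr rfl; intro k _; ring
      _ = (-1)^(2*n) * ∏ k ∈ Finset.range (2*n), (-(z:ℂ) - ζ^k) := by
          rw [Finset.prod_mul_distrib, Finset.prod_const, Finset.card_range]
      _ = (z:ℂ)^(2*n) - 1 := by
          rw [h, Even.neg_one_pow ⟨n, by ring⟩, one_mul, Even.neg_pow ⟨n, by ring⟩]
  -- split the range
  set f : ℕ → ℂ := fun k => (z:ℂ) + ζ^k with hf
  have hsplit : ∏ k ∈ Finset.range (2*n), f k
      = (f 0 * ∏ j ∈ Finset.Ico 1 n, f j) * (f n * ∏ k ∈ Finset.Ico (n+1) (2*n), f k) := by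
    rw [Finset.range_eq_Ico,
      ← Finset.prod_Ico_consecutive f (by omega : 0 ≤ n) (by omega : n ≤ 2*n),
      ← Finset.prod_Ico_consecutive f (by omega : (0:ℕ) ≤ 1) (by omega : 1 ≤ n),
      ← Finset.prod_Ico_consecutive f (by omega : n ≤ n+1) (by omega : n+1 ≤ 2*n)]
    congr 1
    · congr 1
      rw [Finset.prod_Ico_eq_prod_range]
      simp
    · congr 1
      rw [Finset.prod_Ico_eq_prod_range]
      simp
  have hrefl : ∏ k ∈ Finset.Ico (n+1) (2*n), f k = ∏ j ∈ Finset.Ico 1 n, f (2*n - j) := by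
    refine Finset.prod_nbij' (fun k => 2*n - k) (fun j => 2*n - j) ?_ ?_ ?_ ?_ ?_ <;>
      simp only [Finset.mem_Ico] <;> intros a ha
    · omega
    · omega
    · omega
    · omega
    · congr 1
      omega
  -- pairwise
  have hpair : ∀ j ∈ Finset.Ico 1 n, f j * f (2*n - j)
      = (z:ℂ) * ((z:ℂ) + (z:ℂ)⁻¹ + 2 * Real.cos (Real.pi * j / n)) := by
    intro j hj
    simp only [Finset.mem_Ico] at hj
    have hmul : ζ ^ j * ζ ^ (2*n - j) = 1 := by
      rw [← pow_add, show j + (2*n - j) = 2*n by omega, hprim.pow_eq_one]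
    have hcos : ζ ^ j + ζ ^ (2*n - j) = 2 * (Real.cos (Real.pi * j / n) : ℝ) := by
      have hinv : ζ ^ (2*n - j) = (ζ ^ j)⁻¹ := (inv_eq_of_mul_eq_one_right hmul).symm
      rw [hinv, hζpow j, ← Complex.exp_neg, ← neg_mul]
      rw [Complex.ofReal_cos]
      rw [Complex.cos]
      push_cast
      ring
    have hzz : (z:ℂ) * (z:ℂ)⁻¹ = 1 := mul_inv_cancel₀ hw0
    push_cast at hcos ⊢
    simp only [hf]
    linear_combination (z:ℂ) * hcos + hmul - hzz
  have hQ : ((z:ℂ)+1) * ((z:ℂ)-1) * ((z:ℂ)^(n-1) *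
      ∏ j ∈ Finset.Ico 1 n, ((z:ℂ) + (z:ℂ)⁻¹ + 2 * (Real.cos (Real.pi * j / n) : ℝ)))
      = (z:ℂ)^(2*n) - 1 := by
    rw [← hfull, hsplit, hrefl]
    have hPP : (∏ j ∈ Finset.Ico 1 n, f j) * (∏ j ∈ Finset.Ico 1 n, f (2*n-j))
        = (z:ℂ)^(n-1) * ∏ j ∈ Finset.Ico 1 n,
            ((z:ℂ) + (z:ℂ)⁻¹ + 2 * (Real.cos (Real.pi * j / n) : ℝ)) := by
      rw [← Finset.prod_mul_distrib, Finset.prod_congr rfl hpair,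
        Finset.prod_mul_distrib, Finset.prod_const, Nat.card_Ico]
    have hf0 : f 0 = (z:ℂ) + 1 := by simp [hf]
    have hfn : f n = (z:ℂ) - 1 := by simp [hf, hζn]; ring
    rw [hf0, hfn] at *
    rw [← hPP]
    ring
  -- transfer to ℝ
  obtain ⟨k, rfl⟩ : ∃ k, n = k + 1 := ⟨n - 1, by omega⟩
  rw [← Complex.ofReal_inj]
  push_cast at hQ ⊢
  have hne : ((z:ℂ)+1) * ((z:ℂ)-1) * (z:ℂ)^k ≠ 0 := by
    apply mul_ne_zero (by intro h; apply hw2; linear_combination h)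
    exact pow_ne_zero _ hw0
  have hsub : (z:ℂ) - ((z:ℂ))⁻¹ ≠ 0 := by
    intro h
    apply hw2
    have h2 : (z:ℂ) * ((z:ℂ) - ((z:ℂ))⁻¹) = 0 := by rw [h, mul_zero]
    rw [mul_sub, mul_inv_cancel₀ hw0] at h2
    linear_combination h2
  have hP : (∏ j ∈ Finset.Ico 1 (k+1),
      ((z:ℂ) + (↑z)⁻¹ + 2 * Complex.cos ((Real.pi : ℂ) * j / (k+1))))
      = ((z:ℂ)^(2*(k+1)) - 1) / (((z:ℂ)+1) * ((z:ℂ)-1) * (z:ℂ)^k) := by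
    rw [eq_div_iff hne]
    linear_combination hQ
  rw [show ((k:ℂ)+1) = ((k+1 : ℕ) : ℂ) by push_cast; ring] at hP ⊢
  rw [hP, div_eq_div_iff hne hsub]
  field_simp
  have e : (z:ℂ) * (z:ℂ)^k * (z:ℂ)⁻¹ * (z:ℂ)⁻¹^k = 1 := by rw [inv_pow]; field_simp
  linear_combination ((z:ℂ)^2 - 1) * e

/-- Equation (2.7): `∏_{j=1}^{n−1}(m+2+2cos(πj/n))
= (1/(2ⁿ√(m²+4m)))·((m+2+√(m²+4m))ⁿ − (m+2−√(m²+4m))ⁿ)`. -/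
theorem prod_cos_eq (m n : ℕ) (hm : 1 ≤ m) (hn : 1 ≤ n) :
    (∏ j ∈ Finset.Icc 1 (n - 1), ((m : ℝ) + 2 + 2 * Real.cos (Real.pi * j / n))) =
      (1 / (2 ^ n * Real.sqrt ((m : ℝ) ^ 2 + 4 * m))) *
        (((m : ℝ) + 2 + Real.sqrt ((m : ℝ) ^ 2 + 4 * m)) ^ n -
          ((m : ℝ) + 2 - Real.sqrt ((m : ℝ) ^ 2 + 4 * m)) ^ n) := by
  have hm1 : (1:ℝ) ≤ (m:ℝ) := by exact_mod_cast hm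
  set s := Real.sqrt ((m : ℝ) ^ 2 + 4 * m) with hs
  have hpos : (0:ℝ) < (m:ℝ)^2 + 4*m := by nlinarith
  have hs2 : s^2 = (m:ℝ)^2 + 4*m := Real.sq_sqrt hpos.le
  have hs0 : 0 < s := Real.sqrt_pos.mpr hpos
  set x : ℝ := (m:ℝ) + 2 with hx
  have hxs : s < x := by nlinarith
  set z : ℝ := (x + s)/2 with hz
  have hz1 : 1 < z := by
    rw [hz, hx]
    nlinarith
  have hz0 : z ≠ 0 := by linarith
  have hzinv : z⁻¹ = (x - s)/2 := by
    apply inv_eq_of_mul_eq_one_right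
    rw [hz]
    nlinarith
  have hIcc : Finset.Icc 1 (n-1) = Finset.Ico 1 n := by
    rw [← Finset.Ico_add_one_right_eq_Icc]
    congr 1
    omega
  have hzx : z + z⁻¹ = x := by rw [hz, hzinv]; ring
  have hL : ∀ j ∈ Finset.Ico 1 n,
      (m : ℝ) + 2 + 2 * Real.cos (Real.pi * j / n)
        = z + z⁻¹ + 2 * Real.cos (Real.pi * j / n) := by
    intro j _
    rw [hzx, hx]
  rw [hIcc, Finset.prod_congr rfl hL, key_prod n hn z hz1, hzinv]
  have hzs : z - (x-s)/2 = s := by rw [hz]; ring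
  rw [hzs, hz, div_pow, div_pow]
  have h2n : (2:ℝ)^n ≠ 0 := by positivity
  field_simp
end

section
/- Let n ≥ 1 be an integer and define integer sequences p_k, q_k by p_0 = n+3, q_0 = 0, p_k = (n+2)p_{k−1} + q_{k−1} and q_k = 1 − p_{k−1} for k ≥ 1. Then for all k ≥ 0, as real numbers, p_k = (x+y)·((n+2+√(n²+4n))/2)^k + (x−y)·((n+2−√(n²+4n))/2)^k − 1/n, where x = (n²+3n+1)/(2n) and y = (n²+5n+5)/(2√(n²+4n)). -/
/-- The closed form of the sequence `p₀ = n+3`, `q₀ = 0`,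
`p_k = (n+2)p_{k−1} + q_{k−1}`, `q_k = 1 − p_{k−1}`:
`p_k = (x+y)((n+2+√(n²+4n))/2)^k + (x−y)((n+2−√(n²+4n))/2)^k − 1/n`,
where `x = (n²+3n+1)/(2n)` and `y = (n²+5n+5)/(2√(n²+4n))`. -/
theorem p_closed_form (n : ℕ) (hn : 1 ≤ n) (p q : ℕ → ℤ)
    (hp0 : p 0 = (n : ℤ) + 3) (hq0 : q 0 = 0)
    (hp : ∀ k, 1 ≤ k → p k = ((n : ℤ) + 2) * p (k - 1) + q (k - 1))
    (hq : ∀ k, 1 ≤ k → q k = 1 - p (k - 1))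
    (x y : ℝ)
    (hx : x = ((n : ℝ) ^ 2 + 3 * n + 1) / (2 * n))
    (hy : y = ((n : ℝ) ^ 2 + 5 * n + 5) / (2 * Real.sqrt ((n : ℝ) ^ 2 + 4 * n))) :
    ∀ k : ℕ,
      (p k : ℝ) =
        (x + y) * (((n : ℝ) + 2 + Real.sqrt ((n : ℝ) ^ 2 + 4 * n)) / 2) ^ k +
          (x - y) * (((n : ℝ) + 2 - Real.sqrt ((n : ℝ) ^ 2 + 4 * n)) / 2) ^ k -
          1 / n := by
  have hn0 : (0 : ℝ) < n := by exact_mod_cast hn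
  set s := Real.sqrt ((n : ℝ) ^ 2 + 4 * n) with hsdef
  have hs : s ^ 2 = (n : ℝ) ^ 2 + 4 * n := Real.sq_sqrt (by positivity)
  have hspos : 0 < s := Real.sqrt_pos.mpr (by positivity)
  intro k
  induction k using Nat.twoStepInduction with
  | zero =>
    rw [hp0, hx, hy]
    push_cast
    field_simp
    ring
  | one =>
    have h1 : p 1 = ((n : ℤ) + 2) * p 0 + q 0 := hp 1 le_rfl
    rw [h1, hp0, hq0, hx, hy]
    push_cast
    field_simp
    nlinarith [hs, hspos, hn0]
  | more k ih1 ih2 =>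
    have h1 : p (k + 2) = ((n : ℤ) + 2) * p (k + 1) + q (k + 1) := hp (k + 2) (by omega)
    have h2 : q (k + 1) = 1 - p k := hq (k + 1) (by omega)
    rw [h1, h2]
    push_cast
    rw [ih1, ih2]
    have hA : (((n : ℝ) + 2 + s) / 2) * (((n : ℝ) + 2 + s) / 2) = ((n : ℝ) + 2) * (((n : ℝ) + 2 + s) / 2) - 1 := by
      linear_combination hs / 4
    have hB : (((n : ℝ) + 2 - s) / 2) * (((n : ℝ) + 2 - s) / 2) = ((n : ℝ) + 2) * (((n : ℝ) + 2 - s) / 2) - 1 := by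
      linear_combination hs / 4
    have hα : (((n : ℝ) + 2 + s) / 2) ^ (k + 1) = (((n : ℝ) + 2 + s) / 2) ^ k * (((n : ℝ) + 2 + s) / 2) := pow_succ _ _
    have hα2 : (((n : ℝ) + 2 + s) / 2) ^ (k + 2) = (((n : ℝ) + 2 + s) / 2) ^ k * (((n : ℝ) + 2) * (((n : ℝ) + 2 + s) / 2) - 1) := by
      rw [pow_succ, pow_succ, mul_assoc, hA]
    have hβ : (((n : ℝ) + 2 - s) / 2) ^ (k + 1) = (((n : ℝ) + 2 - s) / 2) ^ k * (((n : ℝ) + 2 - s) / 2) := pow_succ _ _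
    have hβ2 : (((n : ℝ) + 2 - s) / 2) ^ (k + 2) = (((n : ℝ) + 2 - s) / 2) ^ k * (((n : ℝ) + 2) * (((n : ℝ) + 2 - s) / 2) - 1) := by
      rw [pow_succ, pow_succ, mul_assoc, hB]
    rw [hα, hα2, hβ, hβ2]
    have hninv : (n : ℝ) * (n : ℝ)⁻¹ = 1 := mul_inv_cancel₀ (ne_of_gt hn0)
    linear_combination -hninv
end

section
/- Let m ≥ 4 and n ≥ 5 be integers, and define p'_{m−2} via the integer recurrence p_0 = n+3, q_0 = 0, p_k = (n+2)p_{k−1} + q_{k−1}, q_k = 1 − p_{k−1} for k ≥ 1, and p'_{m−2} = (n+1)p_{m−3} − p_{m−4} + 1. Then, as real numbers, p'_{m−2} = (1/√(n²+4n)) · ( ((n+2+√(n²+4n))/2)^m − ((n+2−√(n²+4n))/2)^m ). -/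
def fib2 (c : ℤ) : ℕ → ℤ
  | 0 => 0
  | 1 => 1
  | (k+2) => c * fib2 c (k+1) - fib2 c k

lemma fib2_real (c : ℤ) (α β : ℝ) (hs : α + β = (c : ℝ)) (hmul : α * β = 1) :
    ∀ k, ((fib2 c k : ℤ) : ℝ) * (α - β) = α ^ k - β ^ k := by
  have key : ∀ k, ((fib2 c k : ℤ) : ℝ) * (α - β) = α ^ k - β ^ k ∧
      ((fib2 c (k+1) : ℤ) : ℝ) * (α - β) = α ^ (k+1) - β ^ (k+1) := by
    intro k
    induction k with
    | zero => simp [fib2]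
    | succ k ih =>
      obtain ⟨h1, h2⟩ := ih
      refine ⟨h2, ?_⟩
      have hrec : fib2 c (k+2) = c * fib2 c (k+1) - fib2 c k := rfl
      rw [hrec]
      push_cast
      linear_combination (c : ℝ) * h2 - h1 - (α^(k+1) - β^(k+1)) * hs + (α^k - β^k) * hmul
  exact fun k => (key k).1

/-- The closed form of `p'_{m−2} = (n+1)p_{m−3} − p_{m−4} + 1`, where `p₀ = n+3`, `q₀ = 0`,
`p_k = (n+2)p_{k−1} + q_{k−1}`, `q_k = 1 − p_{k−1}`:
`p'_{m−2} = (1/√(n²+4n))·(((n+2+√(n²+4n))/2)^m − ((n+2−√(n²+4n))/2)^m)`. -/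
theorem p'_closed_form (m n : ℕ) (hm : 4 ≤ m) (hn : 5 ≤ n) (p q : ℕ → ℤ)
    (hp0 : p 0 = (n : ℤ) + 3) (hq0 : q 0 = 0)
    (hp : ∀ k, 1 ≤ k → p k = ((n : ℤ) + 2) * p (k - 1) + q (k - 1))
    (hq : ∀ k, 1 ≤ k → q k = 1 - p (k - 1))
    (p' : ℤ) (hp' : p' = ((n : ℤ) + 1) * p (m - 3) - p (m - 4) + 1) :
    (p' : ℝ) =
      (1 / Real.sqrt ((n : ℝ) ^ 2 + 4 * n)) *
        ((((n : ℝ) + 2 + Real.sqrt ((n : ℝ) ^ 2 + 4 * n)) / 2) ^ m -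
          (((n : ℝ) + 2 - Real.sqrt ((n : ℝ) ^ 2 + 4 * n)) / 2) ^ m) := by
  set F : ℕ → ℤ := fib2 ((n : ℤ) + 2) with hF
  -- key integer identity: n * p k + 1 = (n²+3n+1) F(k+1) - (n+1) F k
  have hr : ∀ k, (n : ℤ) * p k + 1 =
      ((n : ℤ)^2 + 3*n + 1) * F (k+1) - ((n : ℤ) + 1) * F k := by
    have key : ∀ k, ((n : ℤ) * p k + 1 =
        ((n : ℤ)^2 + 3*n + 1) * F (k+1) - ((n : ℤ) + 1) * F k) ∧
        ((n : ℤ) * p (k+1) + 1 =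
        ((n : ℤ)^2 + 3*n + 1) * F (k+2) - ((n : ℤ) + 1) * F (k+1)) := by
      intro k
      induction k with
      | zero =>
        have hp1 : p 1 = ((n : ℤ) + 2) * p 0 + q 0 := hp 1 (le_refl 1)
        have e0 : F 0 = 0 := rfl
        have e1 : F 1 = 1 := rfl
        have e2 : F 2 = ((n : ℤ) + 2) * F 1 - F 0 := rfl
        constructor
        · rw [hp0, e0, e1]; ring
        · rw [hp1, hp0, hq0, e2, e1, e0]; ring
      | succ k ih =>
        obtain ⟨h1, h2⟩ := ih
        refine ⟨h2, ?_⟩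
        have hpk : p (k+2) = ((n : ℤ) + 2) * p (k+1) + q (k+1) := hp (k+2) (by omega)
        have hqk : q (k+1) = 1 - p k := hq (k+1) (by omega)
        have e3 : F (k+3) = ((n : ℤ) + 2) * F (k+2) - F (k+1) := rfl
        have e2 : F (k+2) = ((n : ℤ) + 2) * F (k+1) - F k := rfl
        rw [hpk, hqk, e3, e2]
        rw [e2] at h2
        linear_combination ((n : ℤ) + 2) * h2 - h1
    exact fun k => (key k).1
  -- show p' = F m
  obtain ⟨a, rfl⟩ : ∃ a, m = a + 4 := ⟨m - 4, by omega⟩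
  have hn0 : (n : ℤ) ≠ 0 := by positivity
  have hpFm : p' = F (a + 4) := by
    have hp'' : p' = ((n : ℤ) + 1) * p (a+1) - p a + 1 := hp'
    have hr1 := hr (a+1)
    have hr0 := hr a
    have e4 : F (a+4) = ((n : ℤ) + 2) * F (a+3) - F (a+2) := rfl
    have e3 : F (a+3) = ((n : ℤ) + 2) * F (a+2) - F (a+1) := rfl
    have e2 : F (a+2) = ((n : ℤ) + 2) * F (a+1) - F a := rfl
    have key : (n : ℤ) * p' = (n : ℤ) * F (a+4) := by
      rw [e4, e3, e2]
      rw [e2] at hr1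
      linear_combination (n : ℤ) * hp'' + ((n : ℤ) + 1) * hr1 - hr0
    exact mul_left_cancel₀ hn0 key
  -- real part
  set s : ℝ := Real.sqrt ((n : ℝ) ^ 2 + 4 * n) with hsdef
  have hDpos : (0 : ℝ) < (n : ℝ) ^ 2 + 4 * n := by
    have : (5 : ℝ) ≤ (n : ℝ) := by exact_mod_cast hn
    nlinarith
  have hs2 : s ^ 2 = (n : ℝ) ^ 2 + 4 * n := Real.sq_sqrt hDpos.le
  have hspos : 0 < s := Real.sqrt_pos.mpr hDpos
  set α : ℝ := ((n : ℝ) + 2 + s) / 2 with hα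
  set β : ℝ := ((n : ℝ) + 2 - s) / 2 with hβ
  have hsum : α + β = (((n : ℤ) + 2 : ℤ) : ℝ) := by push_cast; ring
  have hmul : α * β = 1 := by
    rw [hα, hβ]
    have : ((n : ℝ) + 2 + s) / 2 * (((n : ℝ) + 2 - s) / 2) =
        (((n : ℝ) + 2)^2 - s^2) / 4 := by ring
    rw [this, hs2]; ring
  have hbinet := fib2_real ((n : ℤ) + 2) α β hsum hmul (a+4)
  have hαβ : α - β = s := by rw [hα, hβ]; ring
  rw [hαβ] at hbinet
  rw [hpFm]
  rw [eq_div_iff (two_ne_zero)] at *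
  field_simp
  linear_combination hbinet
end

section
/- For all integers m ≥ 1 and n ≥ 1, the double product ∏_{i=1}^{m−1} ( n + 2 + 2·cos(πi/m) ) · ∏_{j=1}^{n−1} ( m + 2 + 2·cos(πj/n) ) equals ( ((n+2+√(n²+4n))^m − (n+2−√(n²+4n))^m) · ((m+2+√(m²+4m))^n − (m+2−√(m²+4m))^n) ) / ( 2^{m+n} · √((n²+4n)(m²+4m)) ). -/
open Complex Finset

lemma total_prod (m : ℕ) (hm : 1 ≤ m) (a : ℂ) :
    ∏ k ∈ Finset.range (2*m), (a + Complex.exp (↑Real.pi * Complex.I / m) ^ k)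
      = a ^ (2*m) - 1 := by
  have hm' : (m : ℂ) ≠ 0 := Nat.cast_ne_zero.mpr (by omega)
  have hE : IsPrimitiveRoot (Complex.exp (↑Real.pi * Complex.I / m)) (2*m) := by
    have h := Complex.isPrimitiveRoot_exp (2*m) (by omega)
    convert h using 2
    push_cast
    field_simp
  have h := X_pow_sub_C_eq_prod (R := ℂ) hE (by omega) (one_pow (2*m))
  have h2 := congrArg (Polynomial.eval (-a)) h
  simp [Polynomial.eval_prod] at h2
  calc ∏ k ∈ Finset.range (2*m), (a + Complex.exp (↑Real.pi * Complex.I / m) ^ k)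
      = ∏ k ∈ Finset.range (2*m), (-1) * (-a - Complex.exp (↑Real.pi * Complex.I / m) ^ k) := by
        apply Finset.prod_congr rfl; intro k _; ring
    _ = (-1)^(2*m) * ∏ k ∈ Finset.range (2*m), (-a - Complex.exp (↑Real.pi * Complex.I / m) ^ k) := by
        rw [Finset.prod_mul_distrib, Finset.prod_const, Finset.card_range]
    _ = a ^ (2*m) - 1 := by
        rw [← h2, pow_mul, neg_one_sq, one_pow, one_mul]

lemma key_complex (m : ℕ) (hm : 1 ≤ m) (a b : ℂ) (hab : a * b = 1) (hne : a ≠ b) :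
    (a - b) * ∏ k ∈ Finset.Icc 1 (m-1), (a + b + 2 * Complex.cos (↑Real.pi * k / m))
      = a ^ m - b ^ m := by
  obtain ⟨l, rfl⟩ : ∃ l, m = l + 1 := ⟨m - 1, by omega⟩
  have ha0 : a ≠ 0 := left_ne_zero_of_mul_eq_one hab
  have hmC : ((l + 1 : ℕ) : ℂ) ≠ 0 := Nat.cast_ne_zero.mpr (by omega)
  set E := Complex.exp (↑Real.pi * Complex.I / (l + 1 : ℕ)) with hEdef
  have hE0 : E ≠ 0 := Complex.exp_ne_zero _
  have hEk : ∀ k : ℕ, E ^ k = Complex.exp (k * (↑Real.pi * Complex.I / (l + 1 : ℕ))) :=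
    fun k => (Complex.exp_nat_mul _ k).symm
  have hc2 : ((2*(l+1) : ℕ) : ℂ) / ((l + 1 : ℕ) : ℂ) = 2 := by
    rw [Nat.cast_mul, mul_div_assoc, div_self hmC, mul_one, Nat.cast_ofNat]
  have hc1 : ((l + 1 : ℕ) : ℂ) / ((l + 1 : ℕ) : ℂ) = 1 := div_self hmC
  have hE2m : E ^ (2*(l+1)) = 1 := by
    rw [hEk]
    rw [show ((2*(l+1) : ℕ) : ℂ) * (↑Real.pi * Complex.I / ((l + 1 : ℕ) : ℂ))
        = (((2*(l+1) : ℕ) : ℂ) / ((l + 1 : ℕ) : ℂ)) * (↑Real.pi * Complex.I) by ring,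
      hc2, show (2 : ℂ) * (↑Real.pi * Complex.I) = 2 * ↑Real.pi * Complex.I by ring]
    exact Complex.exp_two_pi_mul_I
  have hEm : E ^ (l+1) = -1 := by
    rw [hEk]
    rw [show (((l+1) : ℕ) : ℂ) * (↑Real.pi * Complex.I / ((l + 1 : ℕ) : ℂ))
        = (((l+1) : ℕ) : ℂ) / ((l + 1 : ℕ) : ℂ) * (↑Real.pi * Complex.I) by ring,
      hc1, one_mul]
    exact Complex.exp_pi_mul_I
  have hIcc : Finset.Icc 1 (l + 1 - 1) = Finset.Ico 1 (l+1) := by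
    rw [Nat.add_sub_cancel, ← Finset.Ico_add_one_right_eq_Icc]
  have hterm : ∀ k ∈ Finset.Ico 1 (l+1),
      a + b + 2 * Complex.cos (↑Real.pi * k / (l+1 : ℕ))
        = b * ((a + E ^ k) * (a + E ^ (2*(l+1) - k))) := by
    intro k hk
    simp only [Finset.mem_Ico] at hk
    have hrel : E ^ (2*(l+1) - k) * E ^ k = 1 := by
      rw [← pow_add, show 2*(l+1) - k + k = 2*(l+1) by omega]; exact hE2m
    have hinv : E ^ (2*(l+1) - k) = (E ^ k)⁻¹ := eq_inv_of_mul_eq_one_left hrel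
    have hc : 2 * Complex.cos (↑Real.pi * k / (l+1 : ℕ)) = E ^ k + E ^ (2*(l+1) - k) := by
      rw [hinv, Complex.cos, hEk, ← Complex.exp_neg,
        show (↑Real.pi * (k:ℂ) / ((l+1 : ℕ) : ℂ)) * Complex.I
          = (k:ℂ) * (↑Real.pi * Complex.I / ((l+1 : ℕ) : ℂ)) by ring]
      ring
    rw [hc]
    linear_combination (-(a + E^k + E^(2*(l+1)-k))) * hab - b * hrel
  have hswap : ∏ k ∈ Finset.Ico ((l+1)+1) (2*(l+1)), (a + E^k)
      = ∏ k ∈ Finset.Ico 1 (l+1), (a + E^(2*(l+1) - k)) := by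
    refine Finset.prod_nbij' (fun k => 2*(l+1) - k) (fun k => 2*(l+1) - k) ?_ ?_ ?_ ?_ ?_
    · intro x hx; simp only [Finset.mem_Ico] at hx ⊢; omega
    · intro x hx; simp only [Finset.mem_Ico] at hx ⊢; omega
    · intro x hx; simp only [Finset.mem_Ico] at hx; omega
    · intro x hx; simp only [Finset.mem_Ico] at hx; omega
    · intro x hx
      simp only [Finset.mem_Ico] at hx
      rw [show 2*(l+1) - (2*(l+1) - x) = x by omega]
  have htot := total_prod (l+1) (by omega) a
  have hdecomp : ∏ k ∈ Finset.range (2*(l+1)), (a+E^k)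
      = (a+1) * ((∏ k ∈ Finset.Ico 1 (l+1), (a+E^k)) *
          ((a + E^(l+1)) * ∏ k ∈ Finset.Ico ((l+1)+1) (2*(l+1)), (a+E^k))) := by
    rw [Finset.range_eq_Ico, Finset.prod_eq_prod_Ico_succ_bot (by omega),
      ← Finset.prod_Ico_consecutive _ (by omega : 1 ≤ l+1) (by omega : l+1 ≤ 2*(l+1)),
      Finset.prod_eq_prod_Ico_succ_bot (by omega : l+1 < 2*(l+1))]
    simp only [pow_zero, zero_add]
  rw [hdecomp, hswap, hEm] at htot
  set P := ∏ k ∈ Finset.Ico 1 (l+1), (a + E ^ k) with hP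
  set Q := ∏ k ∈ Finset.Ico 1 (l+1), (a + E ^ (2*(l+1) - k)) with hQ
  have hPQ : (a^2 - 1) * (P * Q) = a^(2*(l+1)) - 1 := by
    rw [← htot]; ring
  rw [hIcc, Finset.prod_congr rfl hterm, Finset.prod_mul_distrib, Finset.prod_const,
    Nat.card_Ico, Finset.prod_mul_distrib, ← hP, ← hQ]
  have hl : l + 1 - 1 = l := by omega
  rw [hl]
  refine mul_left_cancel₀ (pow_ne_zero (l+1) ha0) ?_
  have h1 : (a*b)^l = 1 := by rw [hab, one_pow]
  linear_combination hPQ + (P*Q*(a^2 - a*b) + a*b) * h1 + (1 - P*Q) * hab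

lemma key_real (m : ℕ) (hm : 1 ≤ m) (a b : ℝ) (hab : a * b = 1) (hne : a ≠ b) :
    ∏ k ∈ Finset.Icc 1 (m-1), (a + b + 2 * Real.cos (Real.pi * k / m))
      = (a ^ m - b ^ m) / (a - b) := by
  have habC : (a : ℂ) * (b : ℂ) = 1 := by exact_mod_cast hab
  have hneC : (a : ℂ) ≠ (b : ℂ) := fun h => hne (by exact_mod_cast h)
  have h := key_complex m hm a b habC hneC
  have h2 : ((a : ℂ) - b) * (((∏ k ∈ Finset.Icc 1 (m-1),
      (a + b + 2 * Real.cos (Real.pi * k / m)) : ℝ)) : ℂ) = (a : ℂ) ^ m - (b : ℂ) ^ m := by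
    rw [← h]
    congr 1
    push_cast
    rfl
  have h3 : (a - b) * (∏ k ∈ Finset.Icc 1 (m-1),
      (a + b + 2 * Real.cos (Real.pi * k / m))) = a ^ m - b ^ m := by
    exact_mod_cast h2
  rw [eq_div_iff (sub_ne_zero.mpr hne)]
  linarith [h3]

/-- Equation (3.3):
`∏_{i=1}^{m−1}(n+2+2cos(πi/m)) · ∏_{j=1}^{n−1}(m+2+2cos(πj/n))
= ((n+2+√(n²+4n))^m − (n+2−√(n²+4n))^m)((m+2+√(m²+4m))^n − (m+2−√(m²+4m))^n)
  / (2^{m+n}√((n²+4n)(m²+4m)))`. -/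
theorem double_prod_cos_eq (m n : ℕ) (hm : 1 ≤ m) (hn : 1 ≤ n) :
    (∏ i ∈ Finset.Icc 1 (m - 1), ((n : ℝ) + 2 + 2 * Real.cos (Real.pi * i / m))) *
      (∏ j ∈ Finset.Icc 1 (n - 1), ((m : ℝ) + 2 + 2 * Real.cos (Real.pi * j / n))) =
      ((((n : ℝ) + 2 + Real.sqrt ((n : ℝ) ^ 2 + 4 * n)) ^ m -
          ((n : ℝ) + 2 - Real.sqrt ((n : ℝ) ^ 2 + 4 * n)) ^ m) *
        (((m : ℝ) + 2 + Real.sqrt ((m : ℝ) ^ 2 + 4 * m)) ^ n -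
          ((m : ℝ) + 2 - Real.sqrt ((m : ℝ) ^ 2 + 4 * m)) ^ n)) /
      (2 ^ (m + n) * Real.sqrt (((n : ℝ) ^ 2 + 4 * n) * ((m : ℝ) ^ 2 + 4 * m))) := by
  have main : ∀ p q : ℕ, 1 ≤ p → 1 ≤ q →
      ∏ i ∈ Finset.Icc 1 (p - 1), ((q : ℝ) + 2 + 2 * Real.cos (Real.pi * i / p))
        = (((q : ℝ) + 2 + Real.sqrt ((q : ℝ) ^ 2 + 4 * q)) ^ p -
            ((q : ℝ) + 2 - Real.sqrt ((q : ℝ) ^ 2 + 4 * q)) ^ p) /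
          (2 ^ p * Real.sqrt ((q : ℝ) ^ 2 + 4 * q)) := by
    intro p q hp hq
    set s := Real.sqrt ((q : ℝ) ^ 2 + 4 * q) with hs
    have hq1 : (1 : ℝ) ≤ q := by exact_mod_cast hq
    have hs2 : s ^ 2 = (q : ℝ) ^ 2 + 4 * q := Real.sq_sqrt (by positivity)
    have hspos : 0 < s := Real.sqrt_pos.mpr (by positivity)
    set a := ((q : ℝ) + 2 + s) / 2 with ha
    set b := ((q : ℝ) + 2 - s) / 2 with hb
    have hab : a * b = 1 := by
      rw [ha, hb]
      nlinarith [hs2]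
    have hne : a ≠ b := by
      rw [ha, hb]
      intro h
      linarith
    have hk := key_real p hp a b hab hne
    calc ∏ i ∈ Finset.Icc 1 (p - 1), ((q : ℝ) + 2 + 2 * Real.cos (Real.pi * i / p))
        = ∏ i ∈ Finset.Icc 1 (p - 1), (a + b + 2 * Real.cos (Real.pi * i / p)) := by
          apply Finset.prod_congr rfl; intro i _; rw [ha, hb]; ring
      _ = (a ^ p - b ^ p) / (a - b) := hk
      _ = (((q : ℝ) + 2 + s) ^ p - ((q : ℝ) + 2 - s) ^ p) / (2 ^ p * s) := by
          rw [ha, hb, div_pow, div_pow, div_sub_div_same,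
            show ((q : ℝ) + 2 + s) / 2 - ((q : ℝ) + 2 - s) / 2 = s by ring,
            div_div]
  have hm0 : (0:ℝ) ≤ (n : ℝ) ^ 2 + 4 * n := by positivity
  rw [main m n hm hn, main n m hn hm, div_mul_div_comm, Real.sqrt_mul hm0, pow_add]
  ring
end
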